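/- arXiv:1502.05440 — 6 statements merged into one kernel-verified Lean document; each statement's English description precedes it below -/
import Mathlib

section
/- For real numbers r > 0 and ε > 0, with a = r + ε, the following exact identity holds: ∫₀^{arcsin(r/a)} ( a cos θ − √(r² − a² sin² θ) )² dθ = r² · arcsin(r/a) + r·√(2rε + ε²) − (π/2) r². -/
open Real

set_option maxHeartbeats 1000000

lemma cont_sqrt_aux (c : ℝ) : Continuous fun x : ℝ => Real.sqrt (c - x ^ 2) :=
  Real.continuous_sqrt.comp (continuous_const.sub (continuous_pow 2))

lemma integral_sqrt_one_sub_sq_half : ∫ v in (0:ℝ)..1, Real.sqrt (1 - v ^ 2) = π / 4 := by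
  have hi : ∀ c d : ℝ, IntervalIntegrable (fun x : ℝ => Real.sqrt (1 - x ^ 2)) MeasureTheory.volume c d := by
    intro c d
    exact (cont_sqrt_aux 1).intervalIntegrable c d
  have hsplit : (∫ x in (-1:ℝ)..0, Real.sqrt (1 - x ^ 2)) + ∫ x in (0:ℝ)..1, Real.sqrt (1 - x ^ 2)
      = ∫ x in (-1:ℝ)..1, Real.sqrt (1 - x ^ 2) :=
    intervalIntegral.integral_add_adjacent_intervals (hi _ _) (hi _ _)
  have hneg : (∫ x in (-1:ℝ)..0, Real.sqrt (1 - x ^ 2)) = ∫ x in (0:ℝ)..1, Real.sqrt (1 - x ^ 2) := by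
    have h := intervalIntegral.integral_comp_neg (a := (0:ℝ)) (b := 1)
      (fun x : ℝ => Real.sqrt (1 - x ^ 2))
    simp only [neg_zero] at h
    rw [← h]
    apply intervalIntegral.integral_congr
    intro x _
    simp [neg_sq]
  have h2 : (∫ x in (-1:ℝ)..1, Real.sqrt (1 - x ^ 2)) = π / 2 := integral_sqrt_one_sub_sq
  rw [hneg, h2] at hsplit
  linarith

lemma integral_sqrt_sq_sub_sq (r : ℝ) (hr : 0 < r) :
    ∫ u in (0:ℝ)..r, Real.sqrt (r ^ 2 - u ^ 2) = π * r ^ 2 / 4 := by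
  have hsub : ∫ v in (0:ℝ)..1, (r : ℝ) • Real.sqrt (r ^ 2 - (r * v) ^ 2)
      = ∫ u in (0:ℝ)..r, Real.sqrt (r ^ 2 - u ^ 2) := by
    have h := intervalIntegral.integral_comp_smul_deriv (a := (0:ℝ)) (b := 1)
      (f := fun v => r * v) (f' := fun _ => r)
      (g := fun u => Real.sqrt (r ^ 2 - u ^ 2))
      (fun x _ => by simpa using (hasDerivAt_id x).const_mul r)
      continuousOn_const (cont_sqrt_aux _)
    simpa using h
  have heq : ∀ v : ℝ, (r : ℝ) • Real.sqrt (r ^ 2 - (r * v) ^ 2)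
      = r ^ 2 * Real.sqrt (1 - v ^ 2) := by
    intro v
    have : r ^ 2 - (r * v) ^ 2 = r ^ 2 * (1 - v ^ 2) := by ring
    rw [smul_eq_mul, this, Real.sqrt_mul (sq_nonneg r), Real.sqrt_sq hr.le]
    ring
  rw [← hsub]
  simp only [heq]
  rw [intervalIntegral.integral_const_mul, integral_sqrt_one_sub_sq_half]
  ring

/-- The cone-like shadow region contribution to the connectivity mass near a small
circular obstacle: for a node at distance `ε` from an obstacle of radius `r`
(so `a = r + ε` from its centre),
`∫₀^{arcsin(r/a)} (a cos θ − √(r² − a² sin² θ))² dθ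
  = r²·arcsin(r/a) + r·√(2rε + ε²) − (π/2) r²`. -/
theorem integral_shadow_cone_sq (r ε a : ℝ) (hr : 0 < r) (hε : 0 < ε) (ha : a = r + ε) :
    ∫ θ in (0 : ℝ)..(Real.arcsin (r / a)),
        (a * Real.cos θ - Real.sqrt (r ^ 2 - a ^ 2 * Real.sin θ ^ 2)) ^ 2
      = r ^ 2 * Real.arcsin (r / a) + r * Real.sqrt (2 * r * ε + ε ^ 2) - π / 2 * r ^ 2 := by
  have ha0 : 0 < a := by rw [ha]; linarith
  have hra : r < a := by rw [ha]; linarith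
  have hra1 : r / a < 1 := (div_lt_one ha0).mpr hra
  have hra0 : 0 < r / a := div_pos hr ha0
  set α := Real.arcsin (r / a) with hα
  have hα0 : 0 < α := Real.arcsin_pos.mpr hra0
  have hαle : α ≤ π / 2 := Real.arcsin_le_pi_div_two _
  have hsinα : Real.sin α = r / a := Real.sin_arcsin (by linarith) hra1.le
  have hcosα : Real.cos α = Real.sqrt (1 - (r / a) ^ 2) := Real.cos_arcsin _
  -- pointwise rewrite on [0, α]
  have hne : ∀ θ ∈ Set.uIcc (0:ℝ) α, 0 ≤ r ^ 2 - a ^ 2 * Real.sin θ ^ 2 := by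
    intro θ hθ
    rw [Set.uIcc_of_le hα0.le] at hθ
    obtain ⟨h1, h2⟩ := hθ
    have hs0 : 0 ≤ Real.sin θ := Real.sin_nonneg_of_nonneg_of_le_pi h1 (by linarith [Real.pi_pos])
    have hsle : Real.sin θ ≤ Real.sin α := by
      apply Real.strictMonoOn_sin.monotoneOn ⟨by linarith [Real.pi_pos], by linarith⟩
        ⟨by linarith [Real.pi_pos], hαle⟩ h2
    have h3 : a * Real.sin θ ≤ r := by
      have := mul_le_mul_of_nonneg_left hsle ha0.le
      rw [hsinα, mul_div_cancel₀ _ ha0.ne'] at this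
      linarith
    have h4 : (a * Real.sin θ) ^ 2 ≤ r ^ 2 :=
      pow_le_pow_left₀ (mul_nonneg ha0.le hs0) h3 2
    nlinarith
  have hcongr : Set.EqOn
      (fun θ => (a * Real.cos θ - Real.sqrt (r ^ 2 - a ^ 2 * Real.sin θ ^ 2)) ^ 2)
      (fun θ => (a ^ 2 * Real.cos θ ^ 2 + (r ^ 2 - a ^ 2 * Real.sin θ ^ 2))
        - (a * Real.cos θ) • (2 * Real.sqrt (r ^ 2 - (a * Real.sin θ) ^ 2)))
      (Set.uIcc (0:ℝ) α) := by
    intro θ hθ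
    have h := hne θ hθ
    have h2 : r ^ 2 - (a * Real.sin θ) ^ 2 = r ^ 2 - a ^ 2 * Real.sin θ ^ 2 := by ring
    simp only [smul_eq_mul, h2]
    rw [sub_sq, Real.sq_sqrt h]
    ring
  rw [intervalIntegral.integral_congr hcongr]
  have hcos2 : Continuous fun θ : ℝ => Real.cos θ ^ 2 := Real.continuous_cos.pow 2
  have hsin2 : Continuous fun θ : ℝ => Real.sin θ ^ 2 := Real.continuous_sin.pow 2
  have hcont1 : Continuous fun θ : ℝ => a ^ 2 * Real.cos θ ^ 2 + (r ^ 2 - a ^ 2 * Real.sin θ ^ 2) :=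
    (continuous_const.mul hcos2).add (continuous_const.sub (continuous_const.mul hsin2))
  have hsq : Continuous fun θ : ℝ => 2 * Real.sqrt (r ^ 2 - (a * Real.sin θ) ^ 2) :=
    continuous_const.mul (Real.continuous_sqrt.comp
      (continuous_const.sub ((continuous_const.mul Real.continuous_sin).pow 2)))
  have hcont2 : Continuous fun θ : ℝ =>
      (a * Real.cos θ) • (2 * Real.sqrt (r ^ 2 - (a * Real.sin θ) ^ 2)) :=
    (continuous_const.mul Real.continuous_cos).smul hsq
  rw [intervalIntegral.integral_sub (hcont1.intervalIntegrable _ _) (hcont2.intervalIntegrable _ _)]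
  -- second integral via substitution
  have hsub : (∫ θ in (0:ℝ)..α, (a * Real.cos θ) • (2 * Real.sqrt (r ^ 2 - (a * Real.sin θ) ^ 2)))
      = ∫ u in (0:ℝ)..r, 2 * Real.sqrt (r ^ 2 - u ^ 2) := by
    have h := intervalIntegral.integral_comp_smul_deriv (a := (0:ℝ)) (b := α)
      (f := fun θ => a * Real.sin θ) (f' := fun θ => a * Real.cos θ)
      (g := fun u => 2 * Real.sqrt (r ^ 2 - u ^ 2))
      (fun x _ => (Real.hasDerivAt_sin x).const_mul a)
      ((continuous_const.mul Real.continuous_cos).continuousOn)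
      (continuous_const.mul (cont_sqrt_aux _))
    simp only [Function.comp, Real.sin_zero, mul_zero] at h
    rw [h, hsinα, mul_div_cancel₀ _ ha0.ne']
  rw [hsub, intervalIntegral.integral_const_mul, integral_sqrt_sq_sub_sq r hr]
  -- first integral
  have h1 : (∫ θ in (0:ℝ)..α, (a ^ 2 * Real.cos θ ^ 2 + (r ^ 2 - a ^ 2 * Real.sin θ ^ 2)))
      = r ^ 2 * α + a ^ 2 * (Real.sin α * Real.cos α) := by
    have hint : (∫ θ in (0:ℝ)..α, (a ^ 2 * Real.cos θ ^ 2 + (r ^ 2 - a ^ 2 * Real.sin θ ^ 2)))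
        = a ^ 2 * (∫ θ in (0:ℝ)..α, Real.cos θ ^ 2) + (r ^ 2 * α
          - a ^ 2 * (∫ θ in (0:ℝ)..α, Real.sin θ ^ 2)) := by
      rw [intervalIntegral.integral_add (f := fun θ => a ^ 2 * Real.cos θ ^ 2)
          (g := fun θ => r ^ 2 - a ^ 2 * Real.sin θ ^ 2) ((continuous_const.mul hcos2).intervalIntegrable _ _)
          ((continuous_const.sub (continuous_const.mul hsin2)).intervalIntegrable _ _),
        intervalIntegral.integral_sub (f := fun _ => r ^ 2) (g := fun θ => a ^ 2 * Real.sin θ ^ 2) ((continuous_const :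
            Continuous fun _ : ℝ => r ^ 2).intervalIntegrable _ _)
          ((continuous_const.mul hsin2).intervalIntegrable _ _),
        intervalIntegral.integral_const_mul, intervalIntegral.integral_const_mul,
        intervalIntegral.integral_const]
      ring_nf
    rw [hint, integral_cos_sq, integral_sin_sq]
    simp only [Real.sin_zero, Real.cos_zero]
    ring
  rw [h1]
  -- simplify sin α cos α
  have hsc : a ^ 2 * (Real.sin α * Real.cos α) = r * Real.sqrt (2 * r * ε + ε ^ 2) := by
    rw [hsinα, hcosα]
    have h5 : a * Real.sqrt (1 - (r / a) ^ 2) = Real.sqrt (2 * r * ε + ε ^ 2) := by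
      rw [← Real.sqrt_sq ha0.le, ← Real.sqrt_mul (sq_nonneg a)]
      congr 1
      rw [Real.sqrt_sq ha0.le]
      field_simp
      rw [ha]; ring
    calc a ^ 2 * (r / a * Real.sqrt (1 - (r / a) ^ 2))
        = r * (a * Real.sqrt (1 - (r / a) ^ 2)) := by field_simp
      _ = r * Real.sqrt (2 * r * ε + ε ^ 2) := by rw [h5]
  rw [hsc]
  ring
end

section
/- Fix β > 0, r > 0 and ε > 0, and write a = r + ε and θ_c = arcsin(r/a). Then ∫_{−(π−θ_c)}^{π−θ_c} ∫₀^∞ e^{−β s²} s ds dθ + 2 ∫₀^{θ_c} ∫₀^{a cos θ − √(r² − a² sin² θ)} s ds dθ = π/β + (r² − 1/β)·arcsin(r/a) + r·√(2rε + ε²) − (π/2) r². -/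
open Real MeasureTheory Filter


lemma gauss_part {β : ℝ} (hβ : 0 < β) :
    ∫ s in Set.Ioi (0 : ℝ), Real.exp (-β * s ^ 2) * s = 1 / (2 * β) := by
  have hderiv : ∀ x ∈ Set.Ici (0:ℝ),
      HasDerivAt (fun s => -Real.exp (-β * s ^ 2) / (2 * β)) (Real.exp (-β * x ^ 2) * x) x := by
    intro x _
    have h1 : HasDerivAt (fun s : ℝ => -β * s ^ 2) (-β * (2 * x)) x := by
      simpa using ((hasDerivAt_pow 2 x).const_mul (-β))
    have h2 := (Real.hasDerivAt_exp (-β * x ^ 2)).comp x h1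
    have h3 := (h2.neg).div_const (2 * β)
    refine h3.congr_deriv ?_
    field_simp
  have hint : IntegrableOn (fun s => Real.exp (-β * s ^ 2) * s) (Set.Ioi (0:ℝ)) := by
    have := (integrable_mul_exp_neg_mul_sq hβ).integrableOn (s := Set.Ioi (0:ℝ))
    exact this.congr_fun (fun x _ => mul_comm x _) measurableSet_Ioi
  have htend : Tendsto (fun s => -Real.exp (-β * s ^ 2) / (2 * β)) atTop (nhds 0) := by
    have h1 : Tendsto (fun s : ℝ => -β * s ^ 2) atTop atBot := by
      have := (tendsto_pow_atTop (n := 2) (by norm_num)).const_mul_atTop hβ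
      simpa [Function.comp_def, neg_mul] using tendsto_neg_atTop_atBot.comp this
    have h2 := Real.tendsto_exp_atBot.comp h1
    have := (h2.neg).div_const (2 * β)
    simpa using this
  have := MeasureTheory.integral_Ioi_of_hasDerivAt_of_tendsto' hderiv hint htend
  rw [this]
  field_simp
  simp

set_option maxHeartbeats 1000000 in
lemma shadow_part {r a θc : ℝ} (hr : 0 < r) (hra : r < a) (hθc : θc = Real.arcsin (r / a)) :
    ∫ θ in (0:ℝ)..θc, (a * Real.cos θ - Real.sqrt (r ^ 2 - a ^ 2 * Real.sin θ ^ 2)) ^ 2 / 2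
      = (r * Real.sqrt (a ^ 2 - r ^ 2) + r ^ 2 * θc - π / 2 * r ^ 2) / 2 := by
  have ha : 0 < a := hr.trans hra
  have hra1 : r / a < 1 := (div_lt_one ha).2 hra
  have hra0 : 0 < r / a := div_pos hr ha
  have hθc0 : 0 < θc := hθc ▸ Real.arcsin_pos.2 hra0
  have hθc2 : θc < π / 2 := hθc ▸ Real.arcsin_lt_pi_div_two.2 hra1
  have hsinθc : Real.sin θc = r / a := hθc ▸ Real.sin_arcsin (by linarith) hra1.le
  set F : ℝ → ℝ := fun θ =>
      (a ^ 2 * Real.sin (2 * θ) / 4 + r ^ 2 * θ / 2) -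
        (a * Real.sin θ * Real.sqrt (r ^ 2 - a ^ 2 * Real.sin θ ^ 2) +
          r ^ 2 * Real.arcsin (a * Real.sin θ / r)) / 2 with hF
  have hcont : ContinuousOn F (Set.Icc 0 θc) := by
    apply Continuous.continuousOn
    continuity
  have hint : IntervalIntegrable
      (fun θ => (a * Real.cos θ - Real.sqrt (r ^ 2 - a ^ 2 * Real.sin θ ^ 2)) ^ 2 / 2)
      volume 0 θc := by
    apply Continuous.intervalIntegrable
    fun_prop
  have hderiv : ∀ θ ∈ Set.Ioo 0 θc, HasDerivWithinAt F
      ((a * Real.cos θ - Real.sqrt (r ^ 2 - a ^ 2 * Real.sin θ ^ 2)) ^ 2 / 2)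
      (Set.Ioi θ) θ := by
    intro θ hθ
    obtain ⟨hθ1, hθ2⟩ := hθ
    have hpi := Real.pi_pos
    have hs0 : 0 < Real.sin θ :=
      Real.sin_pos_of_pos_of_lt_pi hθ1 (by linarith)
    have hsθ : Real.sin θ < r / a := by
      rw [← hsinθc]
      apply Real.strictMonoOn_sin ⟨by linarith, by linarith⟩
        ⟨by linarith, hθc2.le⟩ hθ2
    have h5 : a * Real.sin θ < r := by
      rw [mul_comm]
      exact (lt_div_iff₀ ha).1 hsθ
    have h6 : 0 < a * Real.sin θ := by positivity
    have hU : 0 < r ^ 2 - a ^ 2 * Real.sin θ ^ 2 := by nlinarith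
    have hne1 : a * Real.sin θ / r ≠ -1 := by
      have : 0 < a * Real.sin θ / r := by positivity
      linarith
    have hne2 : a * Real.sin θ / r ≠ 1 := by
      have : a * Real.sin θ / r < 1 := (div_lt_one hr).2 h5
      linarith
    have d1 : HasDerivAt (fun θ : ℝ => a ^ 2 * Real.sin (2 * θ) / 4)
        (a ^ 2 * (Real.cos (2 * θ) * 2) / 4) θ := by
      have h2θ : HasDerivAt (fun θ : ℝ => 2 * θ) 2 θ := by
        simpa using (hasDerivAt_id θ).const_mul (2 : ℝ)
      have := ((Real.hasDerivAt_sin (2 * θ)).comp θ h2θ).const_mul (a ^ 2)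
      simpa [Function.comp_def, mul_comm] using this.div_const 4
    have d2 : HasDerivAt (fun θ : ℝ => r ^ 2 * θ / 2) (r ^ 2 / 2) θ := by
      simpa using ((hasDerivAt_id θ).const_mul (r ^ 2)).div_const 2
    have hu : HasDerivAt (fun θ : ℝ => r ^ 2 - a ^ 2 * Real.sin θ ^ 2)
        (-(a ^ 2 * (2 * Real.sin θ ^ 1 * Real.cos θ))) θ := by
      exact (((Real.hasDerivAt_sin θ).pow 2).const_mul (a ^ 2)).const_sub (r ^ 2)
    have hg := hu.sqrt (ne_of_gt hU)
    have dsin : HasDerivAt (fun θ : ℝ => a * Real.sin θ) (a * Real.cos θ) θ :=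
      (Real.hasDerivAt_sin θ).const_mul a
    have d3 := dsin.mul hg
    have d4 := dsin.div_const r
    have harc : HasDerivAt (fun θ : ℝ => Real.arcsin (a * Real.sin θ / r))
        (1 / Real.sqrt (1 - (a * Real.sin θ / r) ^ 2) * (a * Real.cos θ / r)) θ := by
      simpa [Function.comp_def] using (Real.hasDerivAt_arcsin hne1 hne2).comp θ d4
    have dF := (d1.add d2).sub ((d3.add (harc.const_mul (r ^ 2))).div_const 2)
    refine HasDerivAt.hasDerivWithinAt ?_
    convert dF using 1
    · rfl
    set G := Real.sqrt (r ^ 2 - a ^ 2 * Real.sin θ ^ 2) with hG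
    have hGpos : 0 < G := Real.sqrt_pos.2 hU
    have hG2 : G ^ 2 = r ^ 2 - a ^ 2 * Real.sin θ ^ 2 := Real.sq_sqrt hU.le
    have hsq : Real.sqrt (1 - (a * Real.sin θ / r) ^ 2) = G / r := by
      rw [show 1 - (a * Real.sin θ / r) ^ 2 = (r ^ 2 - a ^ 2 * Real.sin θ ^ 2) / r ^ 2 by
        field_simp]
      rw [Real.sqrt_div hU.le, Real.sqrt_sq hr.le]
    rw [hsq, Real.cos_two_mul]
    have hcs : Real.sin θ ^ 2 = 1 - Real.cos θ ^ 2 := by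
      nlinarith [Real.sin_sq_add_cos_sq θ]
    field_simp
    linear_combination (4 * G - 4 * a * Real.cos θ) * hG2
      + (-4 * G * a ^ 2) * hcs
  have key := intervalIntegral.integral_eq_sub_of_hasDeriv_right_of_le hθc0.le hcont hderiv hint
  rw [key]
  have hasin : a * Real.sin θc = r := by rw [hsinθc]; field_simp
  have hU0 : r ^ 2 - a ^ 2 * Real.sin θc ^ 2 = 0 := by
    rw [show a ^ 2 * Real.sin θc ^ 2 = (a * Real.sin θc) ^ 2 by ring, hasin]; ring
  have harc1 : Real.arcsin (a * Real.sin θc / r) = π / 2 := by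
    rw [hasin, div_self hr.ne', Real.arcsin_one]
  have hcosθc : Real.cos θc = Real.sqrt (a ^ 2 - r ^ 2) / a := by
    rw [hθc, Real.cos_arcsin,
      show 1 - (r / a) ^ 2 = (a ^ 2 - r ^ 2) / a ^ 2 by field_simp,
      Real.sqrt_div (by nlinarith), Real.sqrt_sq ha.le]
  simp only [hF, hU0, Real.sqrt_zero, mul_zero, harc1, Real.sin_two_mul, hsinθc, hcosθc,
    Real.sin_zero, Real.arcsin_zero, mul_zero, zero_mul, zero_div, zero_add, add_zero]
  field_simp
  simp only [sub_self, mul_zero, Real.sqrt_zero, Real.arcsin_one]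
  ring

/-- The approximated connectivity mass (Eq. 17 of the paper) of a node at distance `ε`
from a circular obstacle of radius `r` (so at distance `a = r + ε` from its centre),
with Rayleigh connection function `e^{−β s²}`:
polar integral over unobscured angles plus twice the cone-like shadow region equals
`π/β + (r² − 1/β)·arcsin(r/a) + r·√(2rε + ε²) − (π/2) r²`. -/
theorem connectivity_mass_small_obstacle (β r ε a θc : ℝ)
    (hβ : 0 < β) (hr : 0 < r) (hε : 0 < ε) (ha : a = r + ε)
    (hθc : θc = Real.arcsin (r / a)) :
    (∫ θ in (-(π - θc))..(π - θc),
        ∫ s in Set.Ioi (0 : ℝ), Real.exp (-β * s ^ 2) * s)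
      + 2 * ∫ θ in (0 : ℝ)..θc,
          ∫ s in (0 : ℝ)..(a * Real.cos θ - Real.sqrt (r ^ 2 - a ^ 2 * Real.sin θ ^ 2)), s
      = π / β + (r ^ 2 - 1 / β) * Real.arcsin (r / a)
        + r * Real.sqrt (2 * r * ε + ε ^ 2) - π / 2 * r ^ 2 := by
  have hra : r < a := by rw [ha]; linarith
  have h1 : (∫ θ in (-(π - θc))..(π - θc),
      ∫ s in Set.Ioi (0 : ℝ), Real.exp (-β * s ^ 2) * s)
      = (π - θc - -(π - θc)) * (1 / (2 * β)) := by
    rw [gauss_part hβ, intervalIntegral.integral_const, smul_eq_mul]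
  have h2 : (∫ θ in (0 : ℝ)..θc,
      ∫ s in (0 : ℝ)..(a * Real.cos θ - Real.sqrt (r ^ 2 - a ^ 2 * Real.sin θ ^ 2)), s)
      = ∫ θ in (0 : ℝ)..θc,
          (a * Real.cos θ - Real.sqrt (r ^ 2 - a ^ 2 * Real.sin θ ^ 2)) ^ 2 / 2 := by
    apply _root_.intervalIntegral.integral_congr
    intro θ _
    simp [integral_id]
  have hae : a ^ 2 - r ^ 2 = 2 * r * ε + ε ^ 2 := by rw [ha]; ring
  rw [h1, h2, shadow_part hr hra hθc, hae, ← hθc]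
  field_simp
  ring
end

section
/- Fix β > 0. Then, as R → ∞, 2∫₀^R e^{−β x²} √(R² − x²) dx = √(π/β)·R − (√π/(4 β^{3/2}))·R^{−1} + O(R^{−2}); i.e. there exist R₀ > 0 and C > 0 such that |2∫₀^R e^{−βx²}√(R²−x²)dx − √(π/β) R + √π/(4β^{3/2} R)| ≤ C/R² for all R ≥ R₀. -/
open Real

open MeasureTheory Set Filter in
private lemma aux_tendsto_exp_sq (c : ℝ) (hc : 0 < c) :
    Tendsto (fun x : ℝ => Real.exp (-c * x ^ 2)) atTop (nhds 0) :=
  Real.tendsto_exp_atBot.comp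
    ((tendsto_pow_atTop two_ne_zero).const_mul_atTop_of_neg (neg_lt_zero.2 hc))

private lemma aux_sq_exp_bound (c x : ℝ) (hc : 0 < c) :
    x ^ 2 * Real.exp (-c * x ^ 2) ≤ 1 / c := by
  have h : c * x ^ 2 ≤ Real.exp (c * x ^ 2) := by
    have := Real.add_one_le_exp (c * x ^ 2); linarith
  have hepos := Real.exp_pos (-c * x ^ 2)
  rw [le_div_iff₀ hc]
  have hprod : Real.exp (c * x ^ 2) * Real.exp (-c * x ^ 2) = 1 := by
    rw [← Real.exp_add, show c * x ^ 2 + -c * x ^ 2 = 0 by ring, Real.exp_zero]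
  calc x ^ 2 * Real.exp (-c * x ^ 2) * c = (c * x ^ 2) * Real.exp (-c * x ^ 2) := by ring
    _ ≤ Real.exp (c * x ^ 2) * Real.exp (-c * x ^ 2) :=
        mul_le_mul_of_nonneg_right h hepos.le
    _ = 1 := hprod

open MeasureTheory Set Filter in
private lemma aux_integral_mul_exp_Ioi (b c : ℝ) (hb : 0 < b) :
    ∫ x in Set.Ioi c, x * Real.exp (-b * x ^ 2) = Real.exp (-b * c ^ 2) / (2 * b) := by
  have A : ∀ x ∈ Set.Ici c, HasDerivAt (fun y : ℝ => -Real.exp (-b * y ^ 2) / (2 * b))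
      (x * Real.exp (-b * x ^ 2)) x := by
    intro x _
    have h1 : HasDerivAt (fun y : ℝ => -b * y ^ 2) (-b * (2 * x ^ 1)) x :=
      (hasDerivAt_pow 2 x).const_mul (-b)
    have h2 := (h1.exp.neg).div_const (2 * b)
    refine h2.congr_deriv ?_
    rw [div_eq_iff (by positivity)]
    ring
  have B : Tendsto (fun y : ℝ => -Real.exp (-b * y ^ 2) / (2 * b)) atTop (nhds 0) := by
    have := ((aux_tendsto_exp_sq b hb).neg).div_const (2 * b)
    simpa using this
  have key := integral_Ioi_of_hasDerivAt_of_tendsto' A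
    ((integrable_mul_exp_neg_mul_sq hb).integrableOn) B
  rw [key]
  ring

open MeasureTheory Set Filter in
private lemma aux_int_sq_exp (b : ℝ) (hb : 0 < b) :
    IntegrableOn (fun x : ℝ => x ^ 2 * Real.exp (-b * x ^ 2)) (Set.Ioi 0) := by
  have h := integrableOn_rpow_mul_exp_neg_mul_sq hb (s := 2) (by norm_num)
  apply h.congr_fun ?_ measurableSet_Ioi
  intro x _
  have h2 : ((2:ℝ)) = ((2:ℕ) : ℝ) := by norm_num
  simp only [h2, Real.rpow_natCast]

open MeasureTheory Set Filter in
private lemma aux_int_pow4_exp (b : ℝ) (hb : 0 < b) :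
    IntegrableOn (fun x : ℝ => x ^ 4 * Real.exp (-b * x ^ 2)) (Set.Ioi 0) := by
  have h := integrableOn_rpow_mul_exp_neg_mul_sq hb (s := 4) (by norm_num)
  apply h.congr_fun ?_ measurableSet_Ioi
  intro x _
  have h4 : ((4:ℝ)) = ((4:ℕ) : ℝ) := by norm_num
  simp only [h4, Real.rpow_natCast]

open MeasureTheory Set Filter in
private lemma aux_moment2 (b : ℝ) (hb : 0 < b) :
    ∫ x in Set.Ioi (0:ℝ), x ^ 2 * Real.exp (-b * x ^ 2)
      = Real.sqrt (π / b) / (4 * b) := by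
  have A : ∀ x ∈ Set.Ici (0:ℝ),
      HasDerivAt (fun y : ℝ => -(y * Real.exp (-b * y ^ 2)) / (2 * b))
      (x ^ 2 * Real.exp (-b * x ^ 2) - Real.exp (-b * x ^ 2) / (2 * b)) x := by
    intro x _
    have h1 : HasDerivAt (fun y : ℝ => -b * y ^ 2) (-b * (2 * x ^ 1)) x :=
      (hasDerivAt_pow 2 x).const_mul (-b)
    have h2 : HasDerivAt (fun y : ℝ => y * Real.exp (-b * y ^ 2))
        (1 * Real.exp (-b * x ^ 2) + x * (Real.exp (-b * x ^ 2) * (-b * (2 * x ^ 1)))) x :=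
      (hasDerivAt_id x).mul h1.exp
    have h3 := (h2.neg).div_const (2 * b)
    refine h3.congr_deriv ?_
    have hb' : (2*b) ≠ 0 := by positivity
    rw [div_eq_iff hb', sub_mul, div_mul_cancel₀ _ hb']
    ring
  have hint0 := aux_int_sq_exp b hb
  have hint1 : IntegrableOn (fun x : ℝ => Real.exp (-b * x ^ 2) / (2 * b)) (Set.Ioi 0) :=
    ((integrable_exp_neg_mul_sq hb).div_const (2 * b)).integrableOn
  have hint : IntegrableOn
      (fun x : ℝ => x ^ 2 * Real.exp (-b * x ^ 2) - Real.exp (-b * x ^ 2) / (2 * b))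
      (Set.Ioi 0) := hint0.sub hint1
  have B : Tendsto (fun y : ℝ => -(y * Real.exp (-b * y ^ 2)) / (2 * b)) atTop (nhds 0) := by
    have hsq : Tendsto (fun y : ℝ => y * Real.exp (-b * y ^ 2)) atTop (nhds 0) := by
      have hg : Tendsto (fun y : ℝ => (1/(b/2)) * Real.exp (-(b/2) * y ^ 2)) atTop (nhds 0) := by
        simpa using (aux_tendsto_exp_sq (b/2) (by linarith)).const_mul (1/(b/2))
      apply squeeze_zero' ?_ ?_ hg
      · filter_upwards [eventually_ge_atTop (0:ℝ)] with y hy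
        positivity
      · filter_upwards [eventually_ge_atTop (1:ℝ)] with y hy
        have h1 : y * Real.exp (-b * y ^ 2) ≤ y ^ 2 * Real.exp (-b * y ^ 2) :=
          mul_le_mul_of_nonneg_right (by nlinarith) (Real.exp_pos _).le
        have h2 : y ^ 2 * Real.exp (-b * y ^ 2)
            = (y ^ 2 * Real.exp (-(b/2) * y ^ 2)) * Real.exp (-(b/2) * y ^ 2) := by
          rw [mul_assoc, ← Real.exp_add,
            show -(b/2) * y ^ 2 + -(b/2) * y ^ 2 = -b * y ^ 2 by ring]
        have h3 := aux_sq_exp_bound (b/2) y (by linarith)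
        calc y * Real.exp (-b * y ^ 2) ≤ y ^ 2 * Real.exp (-b * y ^ 2) := h1
          _ = (y ^ 2 * Real.exp (-(b/2) * y ^ 2)) * Real.exp (-(b/2) * y ^ 2) := h2
          _ ≤ (1/(b/2)) * Real.exp (-(b/2) * y ^ 2) :=
              mul_le_mul_of_nonneg_right h3 (Real.exp_pos _).le
    have := (hsq.neg).div_const (2 * b)
    simpa using this
  have key := integral_Ioi_of_hasDerivAt_of_tendsto' A hint B
  rw [MeasureTheory.integral_sub hint0 hint1] at key
  have hI : ∫ x in Set.Ioi (0:ℝ), Real.exp (-b * x ^ 2) / (2 * b)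
      = (Real.sqrt (π/b) / 2) / (2 * b) := by
    rw [MeasureTheory.integral_div, integral_gaussian_Ioi]
  rw [hI] at key
  have h0 : -((0:ℝ) * Real.exp (-b * (0:ℝ) ^ 2)) / (2 * b) = 0 := by simp
  rw [h0] at key
  have : ∫ x in Set.Ioi (0:ℝ), x ^ 2 * Real.exp (-b * x ^ 2)
      = (Real.sqrt (π/b) / 2) / (2 * b) := by linarith
  rw [this]
  ring

private lemma key_poly (a u : ℝ) (ha : 0 < a) (hu : 0 ≤ u) (hua : u ≤ a)
    (hN : 0 ≤ 2*a^2 - a*u - 2*u^2) :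
    (2*a^2 - a*u - 2*u^2)^2 ≤ (a - u) * (4*a^3) := by
  nlinarith [mul_nonneg (mul_nonneg hu hu) hN,
    mul_nonneg (mul_nonneg hu hu) (mul_nonneg ha.le (by linarith : (0:ℝ) ≤ 3*a - 2*u))]

private lemma sqrt_approx (R x : ℝ) (hR : 0 < R) (hx : 0 ≤ x) (hxR : x ≤ R) :
    |Real.sqrt (R^2 - x^2) - (R - x^2/(2*R))| ≤ x^4 / R^3 := by
  have hR3 : (0:ℝ) < R^3 := by positivity
  have h1 : (0:ℝ) ≤ R^2 - x^2 := by nlinarith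
  have h2 : (0:ℝ) ≤ 2*R^2 - x^2 := by nlinarith
  have hub : Real.sqrt (R^2 - x^2) ≤ R - x^2/(2*R) := by
    have hq : R - x^2/(2*R) = (2*R^2 - x^2)/(2*R) := by field_simp
    rw [hq, show (2*R^2 - x^2)/(2*R) = Real.sqrt (((2*R^2 - x^2)/(2*R))^2) from
      (Real.sqrt_sq (by positivity)).symm]
    apply Real.sqrt_le_sqrt
    rw [div_pow, le_div_iff₀ (by positivity)]
    nlinarith
  have hlb : R - x^2/(2*R) - x^4/R^3 ≤ Real.sqrt (R^2 - x^2) := by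
    rcases le_or_gt (R - x^2/(2*R) - x^4/R^3) 0 with h|h
    · exact h.trans (Real.sqrt_nonneg _)
    · rw [Real.le_sqrt h.le h1]
      have hq : R - x^2/(2*R) - x^4/R^3
          = (2*(R^2)^2 - R^2*x^2 - 2*(x^2)^2)/(2*R^3) := by field_simp
      have hN : 0 ≤ 2*(R^2)^2 - R^2*x^2 - 2*(x^2)^2 := by
        by_contra hc
        push_neg at hc
        have hle : (2*(R^2)^2 - R^2*x^2 - 2*(x^2)^2)/(2*R^3) ≤ 0 :=
          div_nonpos_of_nonpos_of_nonneg hc.le (by positivity)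
        rw [← hq] at hle
        linarith
      rw [hq, div_pow, div_le_iff₀ (by positivity)]
      calc (2*(R^2)^2 - R^2*x^2 - 2*(x^2)^2)^2
          ≤ (R^2 - x^2) * (4*(R^2)^3) :=
            key_poly (R^2) (x^2) (by positivity) (sq_nonneg x) (by nlinarith) hN
        _ = (R^2 - x^2) * (2*R^3)^2 := by ring
  rw [abs_le]
  constructor <;> linarith

open MeasureTheory Set Filter in
private lemma split_int (h : ℝ → ℝ) (R : ℝ)
    (hint : MeasureTheory.IntegrableOn h (Set.Ioi 0)) (hR : (0:ℝ) ≤ R) :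
    ∫ x in (0:ℝ)..R, h x = (∫ x in Set.Ioi (0:ℝ), h x) - ∫ x in Set.Ioi R, h x := by
  have h1 : MeasureTheory.IntegrableOn h (Set.Ioc 0 R) :=
    hint.mono_set Set.Ioc_subset_Ioi_self
  have h2 : MeasureTheory.IntegrableOn h (Set.Ioi R) :=
    hint.mono_set (Set.Ioi_subset_Ioi hR)
  rw [intervalIntegral.integral_of_le hR, eq_sub_iff_add_eq,
    ← MeasureTheory.setIntegral_union (Set.Ioc_disjoint_Ioi le_rfl) measurableSet_Ioi h1 h2,
    Set.Ioc_union_Ioi_eq_Ioi hR]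

set_option maxHeartbeats 2000000 in
/-- Curvature-corrected boundary integral for the disk: as `R → ∞`,
`2∫₀^R e^{−βx²}√(R²−x²) dx = √(π/β)·R − (√π/(4β^{3/2}))·R⁻¹ + O(R⁻²)`. -/
theorem disk_boundary_integral_expansion (β : ℝ) (hβ : 0 < β) :
    ∃ R₀ > (0 : ℝ), ∃ C > (0 : ℝ), ∀ R : ℝ, R₀ ≤ R →
      |2 * (∫ x in (0 : ℝ)..R, Real.exp (-β * x ^ 2) * Real.sqrt (R ^ 2 - x ^ 2))
          - Real.sqrt (π / β) * R + Real.sqrt π / (4 * β ^ ((3 : ℝ) / 2) * R)|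
        ≤ C / R ^ 2 := by
  classical
  have hb2 : (0:ℝ) < β/2 := by linarith
  set C4 : ℝ := ∫ x in Set.Ioi (0:ℝ), x ^ 4 * Real.exp (-β * x ^ 2) with hC4def
  have hC4int := aux_int_pow4_exp β hβ
  have hC4nonneg : 0 ≤ C4 :=
    MeasureTheory.setIntegral_nonneg measurableSet_Ioi (fun x _ => by positivity)
  clear_value C4
  refine ⟨1, one_pos, 2*C4 + 16/β^3 + 32/β^4 + 1, by positivity, ?_⟩
  intro R hR1
  have hR : (0:ℝ) < R := lt_of_lt_of_le one_pos hR1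
  -- continuity facts
  have hgc : Continuous (fun x : ℝ => Real.exp (-β * x ^ 2)) :=
    Real.continuous_exp.comp ((continuous_const).mul (continuous_pow 2))
  have hf1c : Continuous (fun x : ℝ => Real.exp (-β * x ^ 2) * Real.sqrt (R ^ 2 - x ^ 2)) :=
    hgc.mul ((continuous_const.sub (continuous_pow 2)).sqrt)
  have hf2c : Continuous (fun x : ℝ => Real.exp (-β * x ^ 2) * (R - x ^ 2 / (2*R))) :=
    hgc.mul (continuous_const.sub ((continuous_pow 2).div_const (2*R)))
  have hx2c : Continuous (fun x : ℝ => x ^ 2 * Real.exp (-β * x ^ 2)) :=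
    (continuous_pow 2).mul hgc
  -- notation
  set J : ℝ := ∫ x in (0:ℝ)..R, Real.exp (-β * x ^ 2) * Real.sqrt (R ^ 2 - x ^ 2) with hJdef
  set A : ℝ := ∫ x in (0:ℝ)..R, Real.exp (-β * x ^ 2) * (R - x ^ 2 / (2*R)) with hAdef
  set T1 : ℝ := ∫ x in Set.Ioi R, Real.exp (-β * x ^ 2) with hT1def
  set T2 : ℝ := ∫ x in Set.Ioi R, x ^ 2 * Real.exp (-β * x ^ 2) with hT2def
  clear_value J A T1 T2
  have hgint : MeasureTheory.IntegrableOn (fun x : ℝ => Real.exp (-β * x ^ 2)) (Set.Ioi 0) :=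
    (integrable_exp_neg_mul_sq hβ).integrableOn
  have hx2int := aux_int_sq_exp β hβ
  -- step 1 : |J - A| ≤ C4 / R^3
  have hJA : |J - A| ≤ C4 / R^3 := by
    rw [hJdef, hAdef]
    have hi1 : IntervalIntegrable (fun x : ℝ => Real.exp (-β * x ^ 2) * Real.sqrt (R ^ 2 - x ^ 2))
        MeasureTheory.volume 0 R := hf1c.intervalIntegrable 0 R
    have hi2 : IntervalIntegrable (fun x : ℝ => Real.exp (-β * x ^ 2) * (R - x ^ 2 / (2*R)))
        MeasureTheory.volume 0 R := hf2c.intervalIntegrable 0 R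
    have h12 : (∫ x in (0:ℝ)..R, Real.exp (-β * x ^ 2) * Real.sqrt (R ^ 2 - x ^ 2))
        - (∫ x in (0:ℝ)..R, Real.exp (-β * x ^ 2) * (R - x ^ 2 / (2*R)))
        = ∫ x in (0:ℝ)..R,
        (Real.exp (-β * x ^ 2) * Real.sqrt (R ^ 2 - x ^ 2)
          - Real.exp (-β * x ^ 2) * (R - x ^ 2 / (2*R))) :=
      (intervalIntegral.integral_sub hi1 hi2).symm
    rw [h12]
    have hmono : (∫ x in (0:ℝ)..R, |Real.exp (-β * x ^ 2) * Real.sqrt (R ^ 2 - x ^ 2)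
          - Real.exp (-β * x ^ 2) * (R - x ^ 2 / (2*R))|)
        ≤ ∫ x in (0:ℝ)..R, x ^ 4 * Real.exp (-β * x ^ 2) / R ^ 3 := by
      apply intervalIntegral.integral_mono_on hR.le
        ((hf1c.sub hf2c).abs.intervalIntegrable 0 R)
        ((((continuous_pow 4).mul hgc).div_const (R^3)).intervalIntegrable 0 R)
      intro x hx
      have hge := sqrt_approx R x hR hx.1 hx.2
      calc |Real.exp (-β * x ^ 2) * Real.sqrt (R ^ 2 - x ^ 2)
            - Real.exp (-β * x ^ 2) * (R - x ^ 2 / (2*R))|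
          = Real.exp (-β * x ^ 2) * |Real.sqrt (R^2 - x^2) - (R - x^2/(2*R))| := by
            rw [← mul_sub, abs_mul, abs_of_nonneg (Real.exp_pos _).le]
        _ ≤ Real.exp (-β * x ^ 2) * (x^4 / R^3) :=
            mul_le_mul_of_nonneg_left hge (Real.exp_pos _).le
        _ = x ^ 4 * Real.exp (-β * x ^ 2) / R ^ 3 := by ring
    have hlast : (∫ x in (0:ℝ)..R, x ^ 4 * Real.exp (-β * x ^ 2) / R ^ 3) ≤ C4 / R ^ 3 := by
      rw [intervalIntegral.integral_of_le hR.le]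
      have hss : (∫ x in Set.Ioc (0:ℝ) R, x ^ 4 * Real.exp (-β * x ^ 2) / R ^ 3)
          ≤ ∫ x in Set.Ioi (0:ℝ), x ^ 4 * Real.exp (-β * x ^ 2) / R ^ 3 := by
        apply MeasureTheory.setIntegral_mono_set (hC4int.div_const _)
          (Filter.Eventually.of_forall (fun x => by positivity))
          (Filter.Eventually.of_forall (fun x hx => Set.Ioc_subset_Ioi_self hx))
      have heq : (∫ x in Set.Ioi (0:ℝ), x ^ 4 * Real.exp (-β * x ^ 2) / R ^ 3)
          = C4 / R ^ 3 := by
        rw [MeasureTheory.integral_div, hC4def]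
      linarith
    calc |∫ x in (0:ℝ)..R, (Real.exp (-β * x ^ 2) * Real.sqrt (R ^ 2 - x ^ 2)
            - Real.exp (-β * x ^ 2) * (R - x ^ 2 / (2*R)))|
        ≤ ∫ x in (0:ℝ)..R, |Real.exp (-β * x ^ 2) * Real.sqrt (R ^ 2 - x ^ 2)
            - Real.exp (-β * x ^ 2) * (R - x ^ 2 / (2*R))| :=
          intervalIntegral.abs_integral_le_integral_abs hR.le
      _ ≤ ∫ x in (0:ℝ)..R, x ^ 4 * Real.exp (-β * x ^ 2) / R ^ 3 := hmono
      _ ≤ C4 / R ^ 3 := hlast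
  -- step 2 : A in terms of T1 T2
  have hI0 : (∫ x in (0:ℝ)..R, Real.exp (-β * x ^ 2)) = Real.sqrt (π/β)/2 - T1 := by
    rw [hT1def, split_int _ R hgint hR.le, integral_gaussian_Ioi]
  have hI2 : (∫ x in (0:ℝ)..R, x ^ 2 * Real.exp (-β * x ^ 2))
      = Real.sqrt (π/β)/(4*β) - T2 := by
    rw [hT2def, split_int _ R hx2int hR.le, aux_moment2 β hβ]
  have hA : A = R * (∫ x in (0:ℝ)..R, Real.exp (-β * x ^ 2))
      - (1/(2*R)) * (∫ x in (0:ℝ)..R, x ^ 2 * Real.exp (-β * x ^ 2)) := by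
    rw [hAdef]
    rw [← intervalIntegral.integral_const_mul, ← intervalIntegral.integral_const_mul,
      ← intervalIntegral.integral_sub ((show
          Continuous (fun x : ℝ => R * Real.exp (-β * x ^ 2)) from continuous_const.mul hgc).intervalIntegrable 0 R)
        ((show Continuous (fun x : ℝ => (1/(2*R)) * (x ^ 2 * Real.exp (-β * x ^ 2))) from
          continuous_const.mul hx2c).intervalIntegrable 0 R)]
    apply intervalIntegral.integral_congr
    intro x _
    field_simp
  -- tail bounds
  have hT1nonneg : 0 ≤ T1 := by
    rw [hT1def]
    exact MeasureTheory.setIntegral_nonneg measurableSet_Ioi (fun x _ => (Real.exp_pos _).le)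
  have hT2nonneg : 0 ≤ T2 := by
    rw [hT2def]
    exact MeasureTheory.setIntegral_nonneg measurableSet_Ioi (fun x _ => by positivity)
  have hT1le : T1 ≤ Real.exp (-β * R ^ 2) / (2*β*R) := by
    rw [hT1def]
    have hpt : ∀ x ∈ Set.Ioi R, Real.exp (-β * x ^ 2)
        ≤ (1/R) * (x * Real.exp (-β * x ^ 2)) := by
      intro x hx
      have hx' : R ≤ x := (Set.mem_Ioi.mp hx).le
      have h1 : 1 ≤ x / R := (one_le_div hR).mpr hx'
      calc Real.exp (-β * x ^ 2) = 1 * Real.exp (-β * x ^ 2) := by ring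
        _ ≤ (x/R) * Real.exp (-β * x ^ 2) :=
            mul_le_mul_of_nonneg_right h1 (Real.exp_pos _).le
        _ = (1/R) * (x * Real.exp (-β * x ^ 2)) := by ring
    have hmono := MeasureTheory.setIntegral_mono_on
      (hgint.mono_set (Set.Ioi_subset_Ioi hR.le))
      (((integrable_mul_exp_neg_mul_sq hβ).integrableOn).const_mul (1/R))
      measurableSet_Ioi hpt
    rw [MeasureTheory.integral_const_mul, aux_integral_mul_exp_Ioi β R hβ] at hmono
    calc (∫ x in Set.Ioi R, Real.exp (-β * x ^ 2))
        ≤ (1/R) * (Real.exp (-β * R ^ 2) / (2*β)) := hmono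
      _ = Real.exp (-β * R ^ 2) / (2*β*R) := by field_simp
  have hT2le : T2 ≤ 2 * Real.exp (-(β/2) * R ^ 2) / (β^2 * R) := by
    rw [hT2def]
    have hpt : ∀ x ∈ Set.Ioi R, x ^ 2 * Real.exp (-β * x ^ 2)
        ≤ (2/(β*R)) * (x * Real.exp (-(β/2) * x ^ 2)) := by
      intro x hx
      have hx' : R ≤ x := (Set.mem_Ioi.mp hx).le
      have hsplit : Real.exp (-β * x ^ 2)
          = Real.exp (-(β/2) * x ^ 2) * Real.exp (-(β/2) * x ^ 2) := by
        rw [← Real.exp_add]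
        congr 1
        ring
      have hb1 := aux_sq_exp_bound (β/2) x hb2
      have hRx : (1:ℝ)/(β/2) ≤ (2/(β*R)) * x := by
        rw [show (1:ℝ)/(β/2) = (2/(β*R)) * R by field_simp]
        exact mul_le_mul_of_nonneg_left hx' (by positivity)
      calc x ^ 2 * Real.exp (-β * x ^ 2)
          = (x ^ 2 * Real.exp (-(β/2) * x ^ 2)) * Real.exp (-(β/2) * x ^ 2) := by
            rw [hsplit]; ring
        _ ≤ (1/(β/2)) * Real.exp (-(β/2) * x ^ 2) :=
            mul_le_mul_of_nonneg_right hb1 (Real.exp_pos _).le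
        _ ≤ ((2/(β*R)) * x) * Real.exp (-(β/2) * x ^ 2) :=
            mul_le_mul_of_nonneg_right hRx (Real.exp_pos _).le
        _ = (2/(β*R)) * (x * Real.exp (-(β/2) * x ^ 2)) := by ring
    have hmono := MeasureTheory.setIntegral_mono_on
      (hx2int.mono_set (Set.Ioi_subset_Ioi hR.le))
      (((integrable_mul_exp_neg_mul_sq hb2).integrableOn).const_mul (2/(β*R)))
      measurableSet_Ioi hpt
    rw [MeasureTheory.integral_const_mul, aux_integral_mul_exp_Ioi (β/2) R hb2] at hmono
    calc (∫ x in Set.Ioi R, x ^ 2 * Real.exp (-β * x ^ 2))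
        ≤ (2/(β*R)) * (Real.exp (-(β/2) * R ^ 2) / (2*(β/2))) := hmono
      _ = 2 * Real.exp (-(β/2) * R ^ 2) / (β^2 * R) := by field_simp
  -- exponential bounds
  have hexppoly : ∀ t : ℝ, 0 ≤ t → t ^ 2 ≤ Real.exp (2 * t) := by
    intro t ht
    have h2 := Real.add_one_le_exp t
    have h3 : Real.exp (2*t) = Real.exp t * Real.exp t := by
      rw [← Real.exp_add]; ring_nf
    have h4 : (t+1) * (t+1) ≤ Real.exp t * Real.exp t :=
      mul_le_mul h2 h2 (by linarith) (Real.exp_pos t).le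
    nlinarith
  have hE2 : Real.exp (-(β/2) * R ^ 2) ≤ 16 / (β ^ 2 * R ^ 4) := by
    have h := hexppoly (β * R^2 / 4) (by positivity)
    have h2 : Real.exp (2 * (β * R^2 / 4)) = (Real.exp (-(β/2) * R^2))⁻¹ := by
      rw [← Real.exp_neg]; congr 1; ring
    rw [h2] at h
    have h4 : (0:ℝ) < (β * R^2/4)^2 := by positivity
    calc Real.exp (-(β/2)*R^2) = ((Real.exp (-(β/2)*R^2))⁻¹)⁻¹ := by rw [inv_inv]
      _ ≤ ((β * R^2/4)^2)⁻¹ := by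
          apply inv_anti₀ h4 h
      _ = 16/(β^2*R^4) := by field_simp; ring
  have hE1 : Real.exp (-β * R ^ 2) ≤ 16 / (β ^ 2 * R ^ 4) := by
    refine le_trans ?_ hE2
    apply Real.exp_le_exp.mpr
    nlinarith
  -- algebraic identity for the main expression
  have h32 : β ^ ((3:ℝ)/2) = β * Real.sqrt β := by
    rw [Real.sqrt_eq_rpow, show (3:ℝ)/2 = 1 + 1/2 by norm_num, Real.rpow_add hβ,
      Real.rpow_one]
  have hsqβ : (0:ℝ) < Real.sqrt β := Real.sqrt_pos.mpr hβ
  have hM2 : Real.sqrt π / (4 * β ^ ((3:ℝ)/2) * R) = (Real.sqrt (π/β)/(4*β))/R := by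
    rw [h32, Real.sqrt_div pi_pos.le]
    rw [div_div, div_div]
    ring
  have hEeq : 2 * J - Real.sqrt (π / β) * R + Real.sqrt π / (4 * β ^ ((3:ℝ)/2) * R)
      = 2*(J - A) - 2*R*T1 + T2/R := by
    rw [hM2]
    have hAval : A = R * (Real.sqrt (π/β)/2 - T1) - (1/(2*R)) * (Real.sqrt (π/β)/(4*β) - T2) := by
      rw [hA, hI0, hI2]
    linear_combination 2 * hAval
  rw [hEeq]
  -- final bounding
  have htri : |2*(J - A) - 2*R*T1 + T2/R| ≤ 2*|J - A| + 2*R*T1 + T2/R := by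
    have h1 : |2*(J - A) - 2*R*T1 + T2/R| ≤ |2*(J-A) - 2*R*T1| + |T2/R| := abs_add_le _ _
    have h2 : |2*(J-A) - 2*R*T1| ≤ |2*(J-A)| + |2*R*T1| := abs_sub _ _
    have h3 : |2*(J-A)| = 2*|J-A| := by rw [abs_mul]; simp
    have h4 : |2*R*T1| = 2*R*T1 := abs_of_nonneg (by positivity)
    have h5 : |T2/R| = T2/R := abs_of_nonneg (div_nonneg hT2nonneg hR.le)
    linarith
  have hRsq : R^2 ≤ R^3 := pow_le_pow_right₀ hR1 (by norm_num)
  have hRsq4 : R^2 ≤ R^4 := pow_le_pow_right₀ hR1 (by norm_num)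
  have hRsq6 : R^2 ≤ R^6 := pow_le_pow_right₀ hR1 (by norm_num)
  have hbd1 : 2*|J - A| ≤ (2*C4)/R^2 := by
    have h2 : (2*C4)/R^3 ≤ (2*C4)/R^2 := by
      apply div_le_div_of_nonneg_left (by linarith) (by positivity) hRsq
    have h1 : 2*|J - A| ≤ (2*C4)/R^3 := by
      rw [show (2*C4)/R^3 = 2*(C4/R^3) by ring]
      linarith
    linarith
  have hbd2 : 2*R*T1 ≤ (16/β^3)/R^2 := by
    calc 2*R*T1 ≤ 2*R*(Real.exp (-β * R ^ 2) / (2*β*R)) :=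
          mul_le_mul_of_nonneg_left hT1le (by positivity)
      _ = Real.exp (-β * R ^ 2) / β := by field_simp
      _ ≤ (16/(β^2*R^4)) / β := by gcongr
      _ = (16/β^3)/R^4 := by field_simp
      _ ≤ (16/β^3)/R^2 := by
          apply div_le_div_of_nonneg_left (by positivity) (by positivity) hRsq4
  have hbd3 : T2/R ≤ (32/β^4)/R^2 := by
    calc T2/R ≤ (2 * Real.exp (-(β/2) * R ^ 2) / (β^2 * R))/R := by gcongr
      _ ≤ (2 * (16/(β^2*R^4)) / (β^2 * R))/R := by gcongr
      _ = (32/β^4)/R^6 := by field_simp; ring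
      _ ≤ (32/β^4)/R^2 := by
          apply div_le_div_of_nonneg_left (by positivity) (by positivity) hRsq6
  have hone : (0:ℝ) ≤ 1/R^2 := by positivity
  have hsum : (2*C4 + 16/β^3 + 32/β^4 + 1)/R^2
      = (2*C4)/R^2 + (16/β^3)/R^2 + (32/β^4)/R^2 + 1/R^2 := by ring
  calc |2*(J - A) - 2*R*T1 + T2/R| ≤ 2*|J - A| + 2*R*T1 + T2/R := htri
    _ ≤ (2*C4)/R^2 + (16/β^3)/R^2 + (32/β^4)/R^2 := by linarith
    _ ≤ (2*C4 + 16/β^3 + 32/β^4 + 1)/R^2 := by linarith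
end

section
/- Fix β > 0 and r > 0, and define F(ε) = ε² π r² / (3(ε + r)) + (π√π/(β√β))·(1 − (1 − √(1 − (r/(r+ε))²))/2) for ε > 0. Then as ε → 0⁺, F(ε) = π√π/(2β√β) + (π√π/(β√β))·(1/√(2r))·ε^{1/2} + O(ε^{3/2}); i.e. there exist δ > 0 and C > 0 such that |F(ε) − π^{3/2}/(2β^{3/2}) − (π^{3/2}/(β^{3/2}√(2r)))·ε^{1/2}| ≤ C ε^{3/2} for all ε ∈ (0, δ). -/
open Real

set_option maxHeartbeats 1600000 in
/-- Expansion of the connectivity mass near a small spherical obstacle: with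
`F(ε) = ε²πr²/(3(ε+r)) + (π√π/(β√β))(1 − (1 − √(1 − (r/(r+ε))²))/2)`, as `ε → 0⁺`,
`F(ε) = π√π/(2β√β) + (π√π/(β√β))·(1/√(2r))·ε^{1/2} + O(ε^{3/2})`. -/
theorem mass_small_spherical_obstacle_expansion (β r : ℝ) (hβ : 0 < β) (hr : 0 < r)
    (F : ℝ → ℝ)
    (hF : ∀ ε > (0 : ℝ), F ε = ε ^ 2 * π * r ^ 2 / (3 * (ε + r))
        + π * Real.sqrt π / (β * Real.sqrt β)
          * (1 - (1 - Real.sqrt (1 - (r / (r + ε)) ^ 2)) / 2)) :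
    ∃ δ > (0 : ℝ), ∃ C > (0 : ℝ), ∀ ε : ℝ, 0 < ε → ε < δ →
      |F ε - π * Real.sqrt π / (2 * β * Real.sqrt β)
          - π * Real.sqrt π / (β * Real.sqrt β) * (1 / Real.sqrt (2 * r)) * Real.sqrt ε|
        ≤ C * (ε * Real.sqrt ε) := by
  have hπ : (0:ℝ) < π := Real.pi_pos
  set K := π * Real.sqrt π / (β * Real.sqrt β) with hKdef
  have hsβ : 0 < Real.sqrt β := Real.sqrt_pos.mpr hβ
  have hsπ : 0 < Real.sqrt π := Real.sqrt_pos.mpr hπ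
  have hK : 0 < K := div_pos (mul_pos hπ hsπ) (mul_pos hβ hsβ)
  have hsr : 0 < Real.sqrt r := Real.sqrt_pos.mpr hr
  refine ⟨min 1 r, by positivity,
    π * r / 3 + K / 2 * (5 / (Real.sqrt r * r)), by positivity, ?_⟩
  intro ε hε hεδ
  have hε1 : ε < 1 := lt_of_lt_of_le hεδ (min_le_left _ _)
  have hεr : ε < r := lt_of_lt_of_le hεδ (min_le_right _ _)
  have hrε : 0 < r + ε := by linarith
  have hsε : 0 < Real.sqrt ε := Real.sqrt_pos.mpr hε
  have hse : Real.sqrt ε * Real.sqrt ε = ε := Real.mul_self_sqrt hε.le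
  have hsre : Real.sqrt r * Real.sqrt r = r := Real.mul_self_sqrt hr.le
  set s := Real.sqrt (1 - (r / (r + ε)) ^ 2) with hs
  set t := Real.sqrt (2 * ε / r) with ht
  have hs0 : 0 ≤ s := Real.sqrt_nonneg _
  have ht0 : 0 < t := Real.sqrt_pos.mpr (by positivity)
  have hsq_s : s ^ 2 = 1 - (r / (r + ε)) ^ 2 := by
    rw [hs, Real.sq_sqrt]
    have h1 : (r / (r + ε)) ^ 2 ≤ 1 := by
      rw [div_pow, div_le_one (by positivity)]
      nlinarith
    linarith
  have hsq_t : t ^ 2 = 2 * ε / r := Real.sq_sqrt (by positivity)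
  -- √ε/√(2r) = t/2
  have htε : Real.sqrt ε / Real.sqrt (2 * r) = t / 2 := by
    have h2r : 0 < Real.sqrt (2 * r) := Real.sqrt_pos.mpr (by positivity)
    rw [div_eq_div_iff h2r.ne' two_ne_zero, ht, ← Real.sqrt_mul (by positivity),
      show 2 * ε / r * (2 * r) = (2:ℝ)^2 * ε by field_simp,
      Real.sqrt_mul (by positivity), Real.sqrt_sq (by norm_num)]
    ring
  -- main algebraic identity
  have hmain : F ε - π * Real.sqrt π / (2 * β * Real.sqrt β)
      - K * (1 / Real.sqrt (2 * r)) * Real.sqrt ε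
      = ε ^ 2 * π * r ^ 2 / (3 * (ε + r)) + K / 2 * (s - t) := by
    have e1 : π * Real.sqrt π / (2 * β * Real.sqrt β) = K / 2 := by
      rw [hKdef]; ring
    have e2 : K * (1 / Real.sqrt (2 * r)) * Real.sqrt ε = K * (t / 2) := by
      rw [← htε]; ring
    rw [hF ε hε, e1, e2]
    ring
  rw [hmain]
  -- bound on A
  have hεsqrt : ε ≤ Real.sqrt ε := by
    have : Real.sqrt ε ≤ 1 := by
      rw [show (1:ℝ) = Real.sqrt 1 by simp]
      exact Real.sqrt_le_sqrt hε1.le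
    nlinarith
  have hA0 : 0 ≤ ε ^ 2 * π * r ^ 2 / (3 * (ε + r)) := by positivity
  have hA2 : ε ^ 2 * π * r ^ 2 / (3 * (ε + r)) ≤ π * r / 3 * (ε * Real.sqrt ε) := by
    rw [div_le_iff₀ (by positivity)]
    have h1 : ε ^ 2 ≤ ε * Real.sqrt ε := by
      rw [sq]; exact mul_le_mul_of_nonneg_left hεsqrt hε.le
    have h2 : r ^ 2 ≤ r * (ε + r) := by
      rw [sq]; exact mul_le_mul_of_nonneg_left (by linarith) hr.le
    have h3 : ε ^ 2 * r ^ 2 ≤ ε * Real.sqrt ε * (r * (ε + r)) :=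
      mul_le_mul h1 h2 (by positivity) (by positivity)
    calc ε ^ 2 * π * r ^ 2 = π * (ε ^ 2 * r ^ 2) := by ring
      _ ≤ π * (ε * Real.sqrt ε * (r * (ε + r))) := by
          exact mul_le_mul_of_nonneg_left h3 hπ.le
      _ = π * r / 3 * (ε * Real.sqrt ε) * (3 * (ε + r)) := by ring
  -- bound on |s - t|
  set B := 5 / (Real.sqrt r * r) * (ε * Real.sqrt ε) with hB
  have hB0 : 0 < B := by positivity
  have hdiffsq : |s ^ 2 - t ^ 2| = ε ^ 2 * (3 * r + 2 * ε) / (r * (r + ε) ^ 2) := by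
    have : s ^ 2 - t ^ 2 = -(ε ^ 2 * (3 * r + 2 * ε) / (r * (r + ε) ^ 2)) := by
      rw [hsq_s, hsq_t]; field_simp; ring
    rw [this, abs_neg, abs_of_nonneg (by positivity)]
  have hBt : |s ^ 2 - t ^ 2| ≤ B * t := by
    have ht_lb : Real.sqrt ε / Real.sqrt r ≤ t := by
      rw [ht, ← Real.sqrt_div hε.le]
      apply Real.sqrt_le_sqrt
      rw [div_le_div_iff₀ hr hr]
      nlinarith [mul_pos hε hr]
    have hBlb : 5 * ε ^ 2 / r ^ 2 ≤ B * t := by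
      have e3 : B * (Real.sqrt ε / Real.sqrt r) = 5 * ε ^ 2 / r ^ 2 := by
        rw [hB]
        field_simp
        linear_combination r * hse - ε * hsre
      calc 5 * ε ^ 2 / r ^ 2 = B * (Real.sqrt ε / Real.sqrt r) := e3.symm
        _ ≤ B * t := by
            apply mul_le_mul_of_nonneg_left ht_lb hB0.le
    have h5 : ε ^ 2 * (3 * r + 2 * ε) / (r * (r + ε) ^ 2) ≤ 5 * ε ^ 2 / r ^ 2 := by
      rw [div_le_div_iff₀ (by positivity) (by positivity)]
      nlinarith [mul_nonneg (mul_nonneg (sq_nonneg ε) hr.le)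
        (by positivity : (0:ℝ) ≤ 2 * r ^ 2 + 8 * r * ε + 5 * ε ^ 2)]
    rw [hdiffsq]
    linarith
  have hst : |s - t| ≤ B := by
    have hfactor : |s - t| * (s + t) = |s ^ 2 - t ^ 2| := by
      rw [show s + t = |s + t| from (abs_of_nonneg (by positivity)).symm, ← abs_mul]
      congr 1; ring
    have h6 : |s - t| * (s + t) ≤ B * (s + t) := by
      calc |s - t| * (s + t) = |s ^ 2 - t ^ 2| := hfactor
        _ ≤ B * t := hBt
        _ ≤ B * (s + t) := by nlinarith
    exact le_of_mul_le_mul_right h6 (by positivity)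
  -- assemble
  calc |ε ^ 2 * π * r ^ 2 / (3 * (ε + r)) + K / 2 * (s - t)|
      ≤ |ε ^ 2 * π * r ^ 2 / (3 * (ε + r))| + |K / 2 * (s - t)| := abs_add_le _ _
    _ = ε ^ 2 * π * r ^ 2 / (3 * (ε + r)) + K / 2 * |s - t| := by
        rw [abs_of_nonneg hA0, abs_mul, abs_of_nonneg (by positivity : (0:ℝ) ≤ K / 2)]
    _ ≤ π * r / 3 * (ε * Real.sqrt ε) + K / 2 * B :=
        add_le_add hA2 (mul_le_mul_of_nonneg_left hst (by positivity))
    _ = (π * r / 3 + K / 2 * (5 / (Real.sqrt r * r))) * (ε * Real.sqrt ε) := by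
        rw [hB]; ring
end

section
/- Fix β > 0 and r > 0. Then lim_{ρ → ∞} ρ² · 2π ∫₀^∞ (r + ε) · exp( −ρ·(√2/(β√r))·ε^{1/2} ) · ( 1 − ρ·((8βr² − 5)/(6√2 · β · r^{3/2}))·ε^{3/2} ) dε = 2π β² r². -/
open Real MeasureTheory Filter Topology

private lemma integrableOn_rpow_mul_exp_neg_mul_sqrt {q b : ℝ} (hq : -1 < q) (hb : 0 < b) :
    IntegrableOn (fun x : ℝ => x ^ q * Real.exp (-b * x ^ ((1:ℝ)/2))) (Set.Ioi 0) := by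
  rw [← integrableOn_Ioi_comp_rpow_iff
    (fun x : ℝ => x ^ q * Real.exp (-b * x ^ ((1:ℝ)/2))) (two_ne_zero (α := ℝ))]
  have h : IntegrableOn (fun x : ℝ => 2 * (x ^ (2*q + 1) * Real.exp (-b * x)))
      (Set.Ioi 0) := by
    have h1 := integrableOn_rpow_mul_exp_neg_mul_rpow (p := 1) (s := 2*q+1) (b := b)
      (by linarith) (by norm_num) hb
    have h2 : IntegrableOn (fun x : ℝ => x ^ (2*q+1) * Real.exp (-b * x)) (Set.Ioi 0) := by
      refine h1.congr_fun (fun x hx => ?_) measurableSet_Ioi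
      simp only [Real.rpow_one]
    exact h2.const_mul 2
  refine h.congr_fun (fun x hx => ?_) measurableSet_Ioi
  have hx' : (0:ℝ) < x := hx
  rw [smul_eq_mul, ← Real.rpow_mul hx'.le, ← Real.rpow_mul hx'.le]
  norm_num
  rw [Real.rpow_add hx', Real.rpow_one]
  ring

private lemma integral_rpow_mul_exp_neg_mul_sqrt {q b : ℝ} (hq : -1 < q) (hb : 0 < b) :
    ∫ x in Set.Ioi (0:ℝ), x ^ q * Real.exp (-b * x ^ ((1:ℝ)/2))
      = b ^ (-(2*(q+1))) * (2 * Real.Gamma (2*(q+1))) := by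
  have h := integral_rpow_mul_exp_neg_mul_rpow (p := (1:ℝ)/2) (q := q) (b := b)
    (by norm_num) hq hb
  rw [h, show -(q+1)/((1:ℝ)/2) = -(2*(q+1)) by ring, show (q+1)/((1:ℝ)/2) = 2*(q+1) by ring]
  ring

/-- Leading order of the small-obstacle term in the annulus: as `ρ → ∞`,
`ρ² · 2π ∫₀^∞ (r+ε) e^{−ρ(√2/(β√r))√ε} (1 − ρ((8βr²−5)/(6√2βr^{3/2}))ε^{3/2}) dε
  → 2πβ²r²`. -/
theorem small_obstacle_term_limit (β r : ℝ) (hβ : 0 < β) (hr : 0 < r) :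
    Tendsto
      (fun ρ : ℝ => ρ ^ 2 * (2 * π *
        ∫ ε in Set.Ioi (0 : ℝ),
          (r + ε) * Real.exp (-ρ * (Real.sqrt 2 / (β * Real.sqrt r)) * Real.sqrt ε)
            * (1 - ρ * ((8 * β * r ^ 2 - 5) / (6 * Real.sqrt 2 * β * (r * Real.sqrt r)))
                * (ε * Real.sqrt ε))))
      atTop (𝓝 (2 * π * β ^ 2 * r ^ 2)) := by
  set a : ℝ := Real.sqrt 2 / (β * Real.sqrt r) with ha_def
  set m : ℝ := (8 * β * r ^ 2 - 5) / (6 * Real.sqrt 2 * β * (r * Real.sqrt r)) with hm_def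
  have ha : 0 < a := div_pos (Real.sqrt_pos.2 two_pos) (mul_pos hβ (Real.sqrt_pos.2 hr))
  have ha2 : a ^ 2 = 2 / (β ^ 2 * r) := by
    rw [ha_def, div_pow, mul_pow, Real.sq_sqrt (by norm_num : (0:ℝ) ≤ 2),
      Real.sq_sqrt hr.le]
  -- the explicit closed form
  set g : ℝ → ℝ := fun ρ => 2 * π * (2 * r / a ^ 2)
    + (2 * π * (12 / a ^ 4 - 48 * m * r / a ^ 5)) * (1/ρ) ^ 2
    - (2 * π * (1440 * m / a ^ 7)) * (1/ρ) ^ 4 with hg_def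
  have hlim : Tendsto g atTop (𝓝 (2 * π * β ^ 2 * r ^ 2)) := by
    have hinv : Tendsto (fun ρ : ℝ => 1/ρ) atTop (𝓝 0) := by
      simpa [one_div] using tendsto_inv_atTop_zero (𝕜 := ℝ)
    have h := (tendsto_const_nhds (x := 2 * π * (2 * r / a ^ 2)) (f := atTop)).add
      (((hinv.pow 2).const_mul (2 * π * (12 / a ^ 4 - 48 * m * r / a ^ 5))).sub
        ((hinv.pow 4).const_mul (2 * π * (1440 * m / a ^ 7))))
    have hval : 2 * π * (2 * r / a ^ 2) = 2 * π * β ^ 2 * r ^ 2 := by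
      rw [ha2]
      field_simp
    simp only [hg_def]
    convert h using 2 with ρ
    · ring
    · rw [← hval]; simp
  refine hlim.congr' ?_
  filter_upwards [eventually_gt_atTop (0:ℝ)] with ρ hρ
  have hb : 0 < ρ * a := mul_pos hρ ha
  -- rewrite the integrand
  have hcongr : ∀ ε ∈ Set.Ioi (0:ℝ),
      (r + ε) * Real.exp (-ρ * a * Real.sqrt ε) * (1 - ρ * m * (ε * Real.sqrt ε))
      = r * (ε ^ (0:ℝ) * Real.exp (-(ρ*a) * ε ^ ((1:ℝ)/2)))
        + (ε ^ (1:ℝ) * Real.exp (-(ρ*a) * ε ^ ((1:ℝ)/2)))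
        + ((-(ρ*m*r)) * (ε ^ ((3:ℝ)/2) * Real.exp (-(ρ*a) * ε ^ ((1:ℝ)/2)))
          + (-(ρ*m)) * (ε ^ ((5:ℝ)/2) * Real.exp (-(ρ*a) * ε ^ ((1:ℝ)/2)))) := by
    intro ε hε
    have hε' : (0:ℝ) < ε := hε
    have e1 : ε ^ ((3:ℝ)/2) = ε * ε ^ ((1:ℝ)/2) := by
      rw [show (3:ℝ)/2 = 1 + 1/2 by norm_num, Real.rpow_add hε', Real.rpow_one]
    have e2 : ε ^ ((5:ℝ)/2) = ε * ε ^ ((3:ℝ)/2) := by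
      rw [show (5:ℝ)/2 = 1 + 3/2 by norm_num, Real.rpow_add hε', Real.rpow_one]
    rw [Real.sqrt_eq_rpow, Real.rpow_zero, Real.rpow_one, e2, e1,
      show -(ρ*a) = -ρ * a by ring]
    ring
  have hval : ∀ q : ℝ, -1 < q →
      ∫ x in Set.Ioi (0:ℝ), x ^ q * Real.exp (-(ρ*a) * x ^ ((1:ℝ)/2))
        = (ρ*a) ^ (-(2*(q+1))) * (2 * Real.Gamma (2*(q+1))) :=
    fun q hq => integral_rpow_mul_exp_neg_mul_sqrt hq hb
  have hint : ∀ q : ℝ, -1 < q →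
      IntegrableOn (fun x : ℝ => x ^ q * Real.exp (-(ρ*a) * x ^ ((1:ℝ)/2))) (Set.Ioi 0) :=
    fun q hq => integrableOn_rpow_mul_exp_neg_mul_sqrt hq hb
  have i0 := (hint 0 (by norm_num)).const_mul r
  have i1 := hint 1 (by norm_num)
  have i32 := (hint ((3:ℝ)/2) (by norm_num)).const_mul (-(ρ*m*r))
  have i52 := (hint ((5:ℝ)/2) (by norm_num)).const_mul (-(ρ*m))
  have hpow : ∀ n : ℕ, (ρ*a) ^ (-(n:ℝ)) = ((ρ*a) ^ n)⁻¹ := fun n => by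
    rw [Real.rpow_neg hb.le, Real.rpow_natCast]
  have hG : ∀ n : ℕ, Real.Gamma ((n:ℝ) + 1) = n.factorial := Real.Gamma_nat_eq_factorial
  have hΓ2 : Real.Gamma (2*((0:ℝ)+1)) = 1 := by
    rw [show 2*((0:ℝ)+1) = ((1:ℕ):ℝ)+1 by norm_num, hG]; norm_num
  have hΓ4 : Real.Gamma (2*((1:ℝ)+1)) = 6 := by
    rw [show 2*((1:ℝ)+1) = ((3:ℕ):ℝ)+1 by norm_num, hG]; norm_num [Nat.factorial]
  have hΓ5 : Real.Gamma (2*((3:ℝ)/2+1)) = 24 := by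
    rw [show 2*((3:ℝ)/2+1) = ((4:ℕ):ℝ)+1 by norm_num, hG]; norm_num [Nat.factorial]
  have hΓ7 : Real.Gamma (2*((5:ℝ)/2+1)) = 720 := by
    rw [show 2*((5:ℝ)/2+1) = ((6:ℕ):ℝ)+1 by norm_num, hG]; norm_num [Nat.factorial]
  have hI : (∫ ε in Set.Ioi (0:ℝ),
      (r + ε) * Real.exp (-ρ * a * Real.sqrt ε) * (1 - ρ * m * (ε * Real.sqrt ε)))
      = r * (((ρ*a) ^ 2)⁻¹ * 2) + ((ρ*a) ^ 4)⁻¹ * (2 * 6)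
        + ((-(ρ*m*r)) * (((ρ*a) ^ 5)⁻¹ * (2 * 24))
          + (-(ρ*m)) * (((ρ*a) ^ 7)⁻¹ * (2 * 720))) := by
    rw [setIntegral_congr_fun measurableSet_Ioi hcongr]
    have j01 : Integrable (fun x : ℝ => r * (x ^ (0:ℝ) * Real.exp (-(ρ*a) * x ^ ((1:ℝ)/2)))
        + x ^ (1:ℝ) * Real.exp (-(ρ*a) * x ^ ((1:ℝ)/2)))
        (volume.restrict (Set.Ioi 0)) := i0.add i1
    have j34 : Integrable (fun x : ℝ =>
        (-(ρ*m*r)) * (x ^ ((3:ℝ)/2) * Real.exp (-(ρ*a) * x ^ ((1:ℝ)/2)))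
        + (-(ρ*m)) * (x ^ ((5:ℝ)/2) * Real.exp (-(ρ*a) * x ^ ((1:ℝ)/2))))
        (volume.restrict (Set.Ioi 0)) := i32.add i52
    rw [integral_add j01 j34, integral_add i0 i1, integral_add i32 i52,
      integral_const_mul, integral_const_mul, integral_const_mul]
    rw [hval 0 (by norm_num), hval 1 (by norm_num), hval ((3:ℝ)/2) (by norm_num),
      hval ((5:ℝ)/2) (by norm_num)]
    rw [show -(2*((0:ℝ)+1)) = -((2:ℕ):ℝ) by norm_num,
      show -(2*((1:ℝ)+1)) = -((4:ℕ):ℝ) by norm_num,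
      show -(2*((3:ℝ)/2+1)) = -((5:ℕ):ℝ) by norm_num,
      show -(2*((5:ℝ)/2+1)) = -((7:ℕ):ℝ) by norm_num,
      hpow 2, hpow 4, hpow 5, hpow 7, hΓ2, hΓ4, hΓ5, hΓ7]
    ring
  rw [hI, hg_def]
  have hρ' : ρ ≠ 0 := hρ.ne'
  have ha' : a ≠ 0 := ha.ne'
  field_simp
  ring
end

section
/- Fix β > 0 and r > 0. Then lim_{ρ → ∞} ρ² · 4π ∫₀^∞ (r + ε)² · exp( −ρ·(π√π/(β√β))·(1/√(2r))·ε^{1/2} ) dε = 16 β³ r³ / π², which equals (4/3)π r³ · (12 β³/π³). -/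
open Real MeasureTheory Filter Topology

lemma aux_integrable_pow_exp {b : ℝ} (hb : 0 < b) (n : ℕ) :
    IntegrableOn (fun x : ℝ => x ^ n * Real.exp (-b * x)) (Set.Ioi 0) := by
  have h := integrableOn_rpow_mul_exp_neg_mul_rpow (s := (n : ℝ)) (p := 1)
    (by exact lt_of_lt_of_le neg_one_lt_zero (Nat.cast_nonneg n)) one_pos hb
  simpa [Real.rpow_natCast, Real.rpow_one] using h

lemma aux_integral_pow_exp {b : ℝ} (hb : 0 < b) (n : ℕ) :
    ∫ x in Set.Ioi (0 : ℝ), x ^ n * Real.exp (-b * x) = (n.factorial : ℝ) / b ^ (n + 1) := by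
  have h := integral_rpow_mul_exp_neg_mul_rpow (p := 1) (q := (n : ℝ))
    one_pos (by exact lt_of_lt_of_le neg_one_lt_zero (Nat.cast_nonneg n)) hb
  simp only [Real.rpow_one] at h
  simp only [Real.rpow_natCast] at h
  rw [h, show -((n : ℝ) + 1) / 1 = -((n + 1 : ℕ) : ℝ) by push_cast; ring,
    Real.rpow_neg hb.le, Real.rpow_natCast,
    show ((n : ℝ) + 1) / 1 = ((n : ℕ) + 1 : ℝ) by ring,
    Real.Gamma_nat_eq_factorial]
  field_simp

lemma aux_key_integral {r b : ℝ} (hb : 0 < b) :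
    ∫ ε in Set.Ioi (0 : ℝ), (r + ε) ^ 2 * Real.exp (-b * Real.sqrt ε)
      = 2 * r ^ 2 / b ^ 2 + 24 * r / b ^ 4 + 240 / b ^ 6 := by
  have hsub := integral_comp_rpow_Ioi
    (fun x : ℝ => (r + x) ^ 2 * Real.exp (-b * Real.sqrt x)) (p := 2) two_ne_zero
  rw [← hsub]
  have hcong : ∀ u ∈ Set.Ioi (0 : ℝ),
      (|2| * u ^ ((2 : ℝ) - 1)) • ((r + u ^ (2 : ℝ)) ^ 2 * Real.exp (-b * Real.sqrt (u ^ (2 : ℝ))))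
        = 2 * r ^ 2 * (u ^ 1 * Real.exp (-b * u))
          + (4 * r * (u ^ 3 * Real.exp (-b * u)) + 2 * (u ^ 5 * Real.exp (-b * u))) := by
    intro u hu
    have hu0 : (0 : ℝ) < u := hu
    have h2 : u ^ (2 : ℝ) = u ^ 2 := by
      rw [← Real.rpow_natCast u 2]; norm_num
    have hs : Real.sqrt (u ^ 2) = u := Real.sqrt_sq hu0.le
    rw [h2, hs, show (2 : ℝ) - 1 = 1 by norm_num, Real.rpow_one]
    simp only [smul_eq_mul, abs_two]
    ring
  rw [setIntegral_congr_fun measurableSet_Ioi hcong]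
  have h1 : IntegrableOn (fun u : ℝ => 2 * r ^ 2 * (u ^ 1 * Real.exp (-b * u)))
      (Set.Ioi 0) := (aux_integrable_pow_exp hb 1).const_mul _
  have h3 : IntegrableOn (fun u : ℝ => 4 * r * (u ^ 3 * Real.exp (-b * u)))
      (Set.Ioi 0) := (aux_integrable_pow_exp hb 3).const_mul _
  have h5 : IntegrableOn (fun u : ℝ => 2 * (u ^ 5 * Real.exp (-b * u)))
      (Set.Ioi 0) := (aux_integrable_pow_exp hb 5).const_mul _
  have h35 : IntegrableOn (fun u : ℝ => 4 * r * (u ^ 3 * Real.exp (-b * u))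
      + 2 * (u ^ 5 * Real.exp (-b * u))) (Set.Ioi 0) := h3.add h5
  rw [integral_add h1 h35, integral_add h3 h5,
    integral_const_mul, integral_const_mul, integral_const_mul,
    aux_integral_pow_exp hb 1, aux_integral_pow_exp hb 3, aux_integral_pow_exp hb 5]
  norm_num [Nat.factorial]
  ring

/-- Leading order of the small-obstacle term in the spherical shell: as `ρ → ∞`,
`ρ² · 4π ∫₀^∞ (r+ε)² e^{−ρ(π√π/(β√β))(1/√(2r))√ε} dε → 16β³r³/π²`, which equals
`(4/3)πr³·(12β³/π³)`. -/
theorem small_spherical_obstacle_term_limit (β r : ℝ) (hβ : 0 < β) (hr : 0 < r) :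
    Tendsto
      (fun ρ : ℝ => ρ ^ 2 * (4 * π *
        ∫ ε in Set.Ioi (0 : ℝ),
          (r + ε) ^ 2 * Real.exp (-ρ * (π * Real.sqrt π / (β * Real.sqrt β))
            * (1 / Real.sqrt (2 * r)) * Real.sqrt ε)))
      atTop (𝓝 (16 * β ^ 3 * r ^ 3 / π ^ 2))
    ∧ 16 * β ^ 3 * r ^ 3 / π ^ 2 = 4 / 3 * π * r ^ 3 * (12 * β ^ 3 / π ^ 3) := by
  have hπ : (0 : ℝ) < π := Real.pi_pos
  set k : ℝ := π * Real.sqrt π / (β * Real.sqrt β) * (1 / Real.sqrt (2 * r)) with hkdef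
  have hk : 0 < k := by
    have h1 : 0 < Real.sqrt π := Real.sqrt_pos.mpr hπ
    have h2 : 0 < Real.sqrt β := Real.sqrt_pos.mpr hβ
    have h3 : 0 < Real.sqrt (2 * r) := Real.sqrt_pos.mpr (by positivity)
    positivity
  have hk2 : k ^ 2 = π ^ 3 / (2 * r * β ^ 3) := by
    simp only [hkdef, mul_pow, div_pow, one_pow]
    rw [Real.sq_sqrt hπ.le, Real.sq_sqrt hβ.le,
      Real.sq_sqrt (show (0 : ℝ) ≤ 2 * r by positivity)]
    ring
  constructor
  · have heq : (fun ρ : ℝ => ρ ^ 2 * (4 * π *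
        ∫ ε in Set.Ioi (0 : ℝ),
          (r + ε) ^ 2 * Real.exp (-ρ * (π * Real.sqrt π / (β * Real.sqrt β))
            * (1 / Real.sqrt (2 * r)) * Real.sqrt ε)))
        =ᶠ[atTop] (fun ρ : ℝ => 8 * π * r ^ 2 / k ^ 2
          + (96 * π * r / k ^ 4 * (ρ⁻¹) ^ 2 + 960 * π / k ^ 6 * (ρ⁻¹) ^ 4)) := by
      filter_upwards [eventually_gt_atTop (0 : ℝ)] with ρ hρ
      have hb : 0 < ρ * k := mul_pos hρ hk
      have hint : ∀ ε : ℝ, -ρ * (π * Real.sqrt π / (β * Real.sqrt β))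
          * (1 / Real.sqrt (2 * r)) * Real.sqrt ε = -(ρ * k) * Real.sqrt ε := by
        intro ε; rw [hkdef]; ring
      simp_rw [hint]
      rw [aux_key_integral hb]
      have hρ0 : ρ ≠ 0 := hρ.ne'
      have hk0 : k ≠ 0 := hk.ne'
      field_simp
      ring
    rw [show (16 : ℝ) * β ^ 3 * r ^ 3 / π ^ 2
        = 8 * π * r ^ 2 / k ^ 2 + (96 * π * r / k ^ 4 * 0 ^ 2 + 960 * π / k ^ 6 * 0 ^ 4) by
      rw [hk2]; field_simp; ring]
    refine Tendsto.congr' heq.symm ?_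
    exact tendsto_const_nhds.add
      (((tendsto_const_nhds.mul (tendsto_inv_atTop_zero.pow 2)).add
        (tendsto_const_nhds.mul (tendsto_inv_atTop_zero.pow 4))).congr (fun x => by ring))
  · field_simp
    ring
end
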